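/- arXiv:1806.06691 — 2 statements merged into one kernel-verified Lean document; each statement's English description precedes it below -/
import Mathlib

section
/- Let f ∈ L^1(ℝ^d) and a > 0 be such that |f̂(ξ)| ≤ C e^{-a‖ξ‖} for all ξ ∈ ℝ^d. If f vanishes almost everywhere on a nonempty open set, then f = 0 almost everywhere. -/
open MeasureTheory Real Set
open scoped FourierTransform

namespace FourierExpDecayAux

open Complex Filter Metric Module
open scoped RealInnerProductSpace Topology ContDiff

lemma pow_mul_exp_neg_le (m : ℕ) {b t : ℝ} (hb : 0 < b) (ht : 0 ≤ t) :
    t ^ m * Real.exp (-(b * t)) ≤ m.factorial / b ^ m := by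
  have key : (b * t) ^ m ≤ (m.factorial : ℝ) * Real.exp (b * t) := by
    have h := Real.pow_div_factorial_le_exp (x := b * t) (mul_nonneg hb.le ht) m
    rw [div_le_iff₀ (by positivity)] at h
    linarith
  have e1 : Real.exp (-(b * t)) * Real.exp (b * t) = 1 := by
    rw [← Real.exp_add]; simp
  rw [le_div_iff₀ (by positivity : (0:ℝ) < b ^ m)]
  calc t ^ m * Real.exp (-(b * t)) * b ^ m
      = (b * t) ^ m * Real.exp (-(b * t)) := by rw [mul_pow]; ring
    _ ≤ ((m.factorial : ℝ) * Real.exp (b * t)) * Real.exp (-(b * t)) := by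
        exact mul_le_mul_of_nonneg_right key (Real.exp_pos _).le
    _ = m.factorial := by
        rw [mul_assoc, mul_comm (Real.exp (b * t)), e1, mul_one]

lemma integrable_pow_mul_exp_neg (d k : ℕ) {b : ℝ} (hb : 0 < b) :
    Integrable (fun x : EuclideanSpace ℝ (Fin d) => ‖x‖ ^ k * Real.exp (-(b * ‖x‖))) := by
  have hd : (finrank ℝ (EuclideanSpace ℝ (Fin d)) : ℝ) < ((d : ℝ) + 1) := by
    simp [finrank_euclideanSpace]
  have hint : Integrable (fun x : EuclideanSpace ℝ (Fin d) => (1 + ‖x‖) ^ (-((d : ℝ) + 1))) :=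
    integrable_one_add_norm hd
  set M : ℝ := Real.exp b * ((d + 1 + k).factorial / b ^ (d + 1 + k)) with hM
  refine (hint.const_mul M).mono' ?_ ?_
  · exact ((continuous_norm.pow k).mul
      (Real.continuous_exp.comp ((continuous_const.mul continuous_norm).neg))).aestronglyMeasurable
  · filter_upwards with x
    have ht0 : (0:ℝ) ≤ ‖x‖ := norm_nonneg x
    set t : ℝ := ‖x‖ with htdef
    have h1 : (1 + t) ^ (-((d : ℝ) + 1)) = ((1 + t) ^ (d + 1 : ℕ))⁻¹ := by
      rw [← Real.rpow_natCast (1 + t) (d + 1), ← Real.rpow_neg (by linarith)]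
      norm_num
    have key : (1 + t) ^ (d + 1 + k) * Real.exp (-(b * t)) ≤ M := by
      have h2 : Real.exp (-(b * t)) = Real.exp b * Real.exp (-(b * (1 + t))) := by
        rw [← Real.exp_add]; ring_nf
      rw [h2, ← mul_assoc, mul_comm ((1 + t) ^ (d + 1 + k)) (Real.exp b), mul_assoc, hM]
      exact mul_le_mul_of_nonneg_left (pow_mul_exp_neg_le _ hb (by linarith)) (Real.exp_pos b).le
    rw [Real.norm_eq_abs, _root_.abs_of_nonneg (by positivity), h1, ← div_eq_mul_inv,
      le_div_iff₀ (by positivity)]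
    calc t ^ k * Real.exp (-(b * t)) * (1 + t) ^ (d + 1)
        = (t ^ k * (1 + t) ^ (d + 1)) * Real.exp (-(b * t)) := by ring
      _ ≤ ((1 + t) ^ k * (1 + t) ^ (d + 1)) * Real.exp (-(b * t)) := by
          gcongr <;> linarith
      _ = (1 + t) ^ (d + 1 + k) * Real.exp (-(b * t)) := by rw [← pow_add]; ring_nf
      _ ≤ M := key


set_option maxHeartbeats 1000000 in
lemma inv_fourier_eq_zero {d : ℕ} (F : EuclideanSpace ℝ (Fin d) → ℂ)
    (hFm : AEStronglyMeasurable F volume) {a C : ℝ} (ha : 0 < a)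
    (hF : ∀ ξ, ‖F ξ‖ ≤ C * Real.exp (-a * ‖ξ‖))
    (x₀ : EuclideanSpace ℝ (Fin d)) {r : ℝ} (hr : 0 < r)
    (hzero : ∀ y ∈ Metric.ball x₀ r, 𝓕⁻ F y = 0)
    (p : EuclideanSpace ℝ (Fin d)) : 𝓕⁻ F p = 0 := by
  have hπ := Real.pi_pos
  have hC : 0 ≤ C := le_trans (norm_nonneg (F 0)) (by simpa using hF 0)
  set w : EuclideanSpace ℝ (Fin d) := p - x₀ with hwdef
  set u : EuclideanSpace ℝ (Fin d) → ℝ := fun ξ => (inner ℝ ξ w : ℝ) with hu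
  set c : EuclideanSpace ℝ (Fin d) → ℝ := fun ξ => (inner ℝ ξ x₀ : ℝ) with hc
  set K : ℂ := 2 * (π : ℂ) * Complex.I with hK
  set G : ℂ → EuclideanSpace ℝ (Fin d) → ℂ :=
    fun z ξ => F ξ * Complex.exp (K * ((c ξ : ℂ) + z * (u ξ : ℂ))) with hG
  set G' : ℂ → EuclideanSpace ℝ (Fin d) → ℂ :=
    fun z ξ => F ξ * (Complex.exp (K * ((c ξ : ℂ) + z * (u ξ : ℂ))) * (K * (u ξ : ℂ))) with hG'
  set h : ℂ → ℂ := fun z => ∫ ξ, G z ξ with hh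
  set δ : ℝ := a / (2 * π * (‖w‖ + 1)) with hδdef
  have hδ : 0 < δ := by positivity
  set b : ℝ := a - 2 * π * δ * ‖w‖ with hbdef
  have hb : 0 < b := by
    have h1 : 2 * π * δ * ‖w‖ = a * ‖w‖ / (‖w‖ + 1) := by
      rw [hδdef]; field_simp
    have h2 : a * ‖w‖ / (‖w‖ + 1) < a := by
      rw [div_lt_iff₀ (by positivity)]
      nlinarith [norm_nonneg w]
    rw [hbdef, h1]; linarith
  -- norm of the integrand
  have hre : ∀ (x : ℂ) ξ, (K * ((c ξ : ℂ) + x * (u ξ : ℂ))).re = -(2 * π * (x.im * u ξ)) := by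
    intro x ξ
    simp only [hK, Complex.mul_re, Complex.mul_im, Complex.add_re, Complex.add_im,
      Complex.ofReal_re, Complex.ofReal_im, Complex.I_re, Complex.I_im,
      Complex.re_ofNat, Complex.im_ofNat]
    ring
  have hnorm : ∀ (x : ℂ) ξ,
      ‖Complex.exp (K * ((c ξ : ℂ) + x * (u ξ : ℂ)))‖ = Real.exp (-(2 * π * (x.im * u ξ))) := by
    intro x ξ
    rw [Complex.norm_exp, hre]
  have hub : ∀ ξ, |u ξ| ≤ ‖ξ‖ * ‖w‖ := fun ξ => abs_real_inner_le_norm ξ w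
  have hexp_bound : ∀ (x : ℂ), |x.im| ≤ δ → ∀ ξ,
      Real.exp (-(2 * π * (x.im * u ξ))) ≤ Real.exp (2 * π * δ * ‖w‖ * ‖ξ‖) := by
    intro x hx ξ
    rw [Real.exp_le_exp]
    have h1 : -(x.im * u ξ) ≤ |x.im| * |u ξ| := by
      rw [← abs_mul]; exact neg_le_abs _
    have h2 : |x.im| * |u ξ| ≤ δ * (‖ξ‖ * ‖w‖) := by
      apply mul_le_mul hx (hub ξ) (abs_nonneg _) hδ.le
    nlinarith
  have hGbound : ∀ (x : ℂ), |x.im| ≤ δ → ∀ ξ,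
      ‖G x ξ‖ ≤ C * Real.exp (-(b * ‖ξ‖)) := by
    intro x hx ξ
    rw [hG]
    calc ‖F ξ * Complex.exp (K * ((c ξ : ℂ) + x * (u ξ : ℂ)))‖
        = ‖F ξ‖ * Real.exp (-(2 * π * (x.im * u ξ))) := by rw [norm_mul, hnorm]
      _ ≤ (C * Real.exp (-a * ‖ξ‖)) * Real.exp (2 * π * δ * ‖w‖ * ‖ξ‖) := by
          apply mul_le_mul (hF ξ) (hexp_bound x hx ξ) (Real.exp_pos _).le
            (mul_nonneg hC (Real.exp_pos _).le)
      _ = C * Real.exp (-(b * ‖ξ‖)) := by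
          rw [mul_assoc, ← Real.exp_add]
          congr 2
          rw [hbdef]; ring
  have hmeasG : ∀ x : ℂ, AEStronglyMeasurable (G x) volume := by
    intro x
    apply hFm.mul
    apply Continuous.aestronglyMeasurable
    apply Complex.continuous_exp.comp
    apply continuous_const.mul
    exact (Complex.continuous_ofReal.comp (continuous_id.inner continuous_const)).add
      (continuous_const.mul (Complex.continuous_ofReal.comp (continuous_id.inner continuous_const)))
  have hintG : ∀ x : ℂ, |x.im| ≤ δ → Integrable (G x) := by
    intro x hx
    refine ((integrable_pow_mul_exp_neg d 0 hb).const_mul C).mono' (hmeasG x) ?_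
    filter_upwards with ξ
    refine (hGbound x hx ξ).trans (le_of_eq ?_)
    rw [pow_zero, one_mul]
  -- differentiability
  have hS_deriv : ∀ z : ℂ, |z.im| < δ → HasDerivAt h (∫ ξ, G' z ξ) z := by
    intro z hz
    set ε : ℝ := δ - |z.im| with hε
    have hε0 : 0 < ε := by rw [hε]; linarith
    have him : ∀ x ∈ Metric.ball z ε, |x.im| ≤ δ := by
      intro x hx
      have h1 : |x.im - z.im| ≤ ‖x - z‖ := by
        simpa using Complex.abs_im_le_norm (x - z)
      have h2 : ‖x - z‖ < ε := by rwa [← dist_eq_norm, ← Metric.mem_ball]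
      have := abs_sub_abs_le_abs_sub x.im z.im
      linarith [abs_sub_abs_le_abs_sub x.im z.im, h1, h2]
    have key := hasDerivAt_integral_of_dominated_loc_of_deriv_le (𝕜 := ℂ)
      (F := G) (F' := G') (x₀ := z)
      (bound := fun ξ => (C * (2 * π * ‖w‖)) * (‖ξ‖ ^ 1 * Real.exp (-(b * ‖ξ‖))))
      (Metric.ball_mem_nhds z hε0) (Filter.Eventually.of_forall fun x => hmeasG x)
      (hintG z (le_of_lt hz)) ?_ ?_ ?_ ?_
    · exact key.2
    · -- measurability of G' z
      have hGG : G' z = fun ξ => G z ξ * (K * (u ξ : ℂ)) := by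
        funext ξ; rw [hG', hG]; ring
      rw [hGG]
      exact (hmeasG z).mul (aestronglyMeasurable_const.mul
        ((Complex.continuous_ofReal.comp (continuous_id.inner continuous_const)).aestronglyMeasurable))
    · -- bound on G'
      filter_upwards with ξ
      intro x hx
      rw [hG']
      have hKu : ‖K * (u ξ : ℂ)‖ = 2 * π * |u ξ| := by
        rw [norm_mul, hK]
        simp [Complex.norm_real, _root_.abs_of_nonneg hπ.le]
        try ring
      calc ‖F ξ * (Complex.exp (K * ((c ξ : ℂ) + x * (u ξ : ℂ))) * (K * (u ξ : ℂ)))‖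
          = ‖G x ξ‖ * ‖K * (u ξ : ℂ)‖ := by rw [hG]; simp only [norm_mul]; try ring
        _ ≤ (C * Real.exp (-(b * ‖ξ‖))) * (2 * π * (‖ξ‖ * ‖w‖)) := by
            apply mul_le_mul (hGbound x (him x hx) ξ)
              (by rw [hKu]; exact mul_le_mul_of_nonneg_left (hub ξ) (by positivity))
              (norm_nonneg _) (by positivity)
        _ = (C * (2 * π * ‖w‖)) * (‖ξ‖ ^ 1 * Real.exp (-(b * ‖ξ‖))) := by ring
    · exact ((integrable_pow_mul_exp_neg d 1 hb).const_mul _)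
    · -- differentiability pointwise
      filter_upwards with ξ
      intro x hx
      have h1 : HasDerivAt (fun z : ℂ => (c ξ : ℂ) + z * (u ξ : ℂ)) ((u ξ : ℂ)) x := by
        simpa using ((hasDerivAt_id x).mul_const ((u ξ : ℂ))).const_add ((c ξ : ℂ))
      have h2 : HasDerivAt (fun z : ℂ => K * ((c ξ : ℂ) + z * (u ξ : ℂ))) (K * (u ξ : ℂ)) x := by
        simpa using h1.const_mul K
      have h3 := h2.cexp
      have h4 := h3.const_mul (F ξ)
      exact h4
  -- analytic
  set S : Set ℂ := {z : ℂ | |z.im| < δ} with hS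
  have hS_open : IsOpen S := by
    have : S = Complex.im ⁻¹' (Set.Ioo (-δ) δ) := by
      ext z; simp [hS, abs_lt]
    rw [this]
    exact isOpen_Ioo.preimage Complex.continuous_im
  have hS_conn : IsPreconnected S := by
    have : Convex ℝ S := by
      have : S = Complex.imLm ⁻¹' (Set.Ioo (-δ) δ) := by
        ext z; simp [hS, abs_lt, Complex.imLm]
      rw [this]
      exact (convex_Ioo _ _).linear_preimage _
    exact this.isPreconnected
  have hanalytic : AnalyticOnNhd ℂ h S := by
    apply DifferentiableOn.analyticOnNhd _ hS_open
    intro z hz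
    exact ((hS_deriv z hz).differentiableAt).differentiableWithinAt
  -- relation with the inverse Fourier transform
  have hrel : ∀ t : ℝ, h (t : ℂ) = 𝓕⁻ F (x₀ + t • w) := by
    intro t
    rw [hh, Real.fourierInv_eq']
    refine integral_congr_ae (Filter.Eventually.of_forall fun ξ => ?_)
    have hexp : (((2 * π * (inner ℝ ξ (x₀ + t • w) : ℝ) : ℝ)) : ℂ) * Complex.I
        = K * ((c ξ : ℂ) + (t : ℂ) * (u ξ : ℂ)) := by
      have h5 : (inner ℝ ξ (x₀ + t • w) : ℝ) = c ξ + t * u ξ := by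
        rw [hc, hu]; rw [inner_add_right, real_inner_smul_right]
      rw [hK, h5]; push_cast; ring
    show G (t : ℂ) ξ = Complex.exp ((((2 * π * (inner ℝ ξ (x₀ + t • w) : ℝ) : ℝ)) : ℂ)
      * Complex.I) • F ξ
    rw [hexp]
    simp only [hG, smul_eq_mul]
    ring
  -- zeros near 0
  have hzeros : ∀ t : ℝ, |t| < r / (‖w‖ + 1) → h (t : ℂ) = 0 := by
    intro t ht
    rw [hrel t]
    apply hzero
    rw [Metric.mem_ball, dist_eq_norm]
    have : x₀ + t • w - x₀ = t • w := by abel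
    rw [this, norm_smul, Real.norm_eq_abs]
    calc |t| * ‖w‖ ≤ |t| * (‖w‖ + 1) := by
          apply mul_le_mul_of_nonneg_left (by linarith) (abs_nonneg t)
      _ < r / (‖w‖ + 1) * (‖w‖ + 1) := by
          apply mul_lt_mul_of_pos_right ht (by positivity)
      _ = r := by field_simp
  have hfreq : ∃ᶠ z in nhdsWithin (0 : ℂ) {(0:ℂ)}ᶜ, h z = 0 := by
    rw [Filter.frequently_iff]
    intro s hs
    obtain ⟨ε, hε, hεs⟩ := Metric.mem_nhdsWithin_iff.1 hs
    set t : ℝ := min (ε / 2) (r / (‖w‖ + 1) / 2) with htdef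
    have ht1 : 0 < t := lt_min (by positivity) (by positivity)
    refine ⟨(t : ℂ), hεs ⟨?_, ?_⟩, ?_⟩
    · rw [Metric.mem_ball, dist_zero_right, Complex.norm_real, Real.norm_eq_abs,
        _root_.abs_of_nonneg ht1.le]
      calc t ≤ ε / 2 := min_le_left _ _
        _ < ε := by linarith
    · simp only [Set.mem_compl_iff, Set.mem_singleton_iff]
      exact_mod_cast ht1.ne'
    · apply hzeros
      rw [_root_.abs_of_nonneg ht1.le]
      calc t ≤ r / (‖w‖ + 1) / 2 := min_le_right _ _
        _ < r / (‖w‖ + 1) := by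
            have : 0 < r / (‖w‖ + 1) := by positivity
            linarith
  have h0S : (0 : ℂ) ∈ S := by simp [hS, hδ]
  have h1S : (1 : ℂ) ∈ S := by simp [hS, hδ]
  have hzeroS := hanalytic.eqOn_zero_of_preconnected_of_frequently_eq_zero hS_conn h0S hfreq
  have h1 : h 1 = 0 := hzeroS h1S
  have := hrel 1
  rw [Complex.ofReal_one, h1, one_smul] at this
  have hp : x₀ + w = p := by rw [hwdef]; abel
  rw [hp] at this
  exact this.symm


end FourierExpDecayAux

open FourierExpDecayAux

/-- If `f ∈ L¹(ℝ^d)` has Fourier transform bounded by `C e^{-a‖ξ‖}` with `a > 0`,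
and `f` vanishes a.e. on a nonempty open set, then `f = 0` a.e. -/
theorem fourier_exp_decay_vanish_open_implies_zero
    {d : ℕ} (f : EuclideanSpace ℝ (Fin d) → ℂ)
    (hf : Integrable f volume) (a C : ℝ) (ha : 0 < a)
    (hdecay : ∀ ξ : EuclideanSpace ℝ (Fin d), ‖𝓕 f ξ‖ ≤ C * Real.exp (-a * ‖ξ‖))
    (U : Set (EuclideanSpace ℝ (Fin d))) (hU : IsOpen U) (hUne : U.Nonempty)
    (hvanish : ∀ᵐ x ∂volume, x ∈ U → f x = 0) :
    f =ᵐ[volume] 0 := by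
  classical
  obtain ⟨x₀, hx₀⟩ := hUne
  obtain ⟨r, hr, hball⟩ := Metric.isOpen_iff.1 hU x₀ hx₀
  -- modified function vanishing on U
  set f₀ : EuclideanSpace ℝ (Fin d) → ℂ := fun x => if x ∈ U then 0 else f x with hf₀def
  have hae : f₀ =ᵐ[volume] f := by
    filter_upwards [hvanish] with x hx
    by_cases hxU : x ∈ U
    · simp [hf₀def, hxU, hx hxU]
    · simp [hf₀def, hxU]
  have hint₀ : Integrable f₀ volume := hf.congr hae.symm
  have h𝓕eq : 𝓕 f₀ = 𝓕 f := by
    funext w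
    rw [Real.fourier_eq, Real.fourier_eq]
    apply integral_congr_ae
    filter_upwards [hae] with x hx
    rw [hx]
  -- continuity and integrability of the Fourier transform
  have hFcont : Continuous (𝓕 f) :=
    VectorFourier.fourierIntegral_continuous Real.continuous_fourierChar
      (by exact continuous_inner) hf
  have hFmeas : AEStronglyMeasurable (𝓕 f) volume := hFcont.aestronglyMeasurable
  have hFint : Integrable (𝓕 f) volume := by
    refine ((integrable_pow_mul_exp_neg d 0 ha).const_mul C).mono' hFmeas ?_
    filter_upwards with ξ
    refine (hdecay ξ).trans (le_of_eq ?_)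
    rw [pow_zero, one_mul, neg_mul]
  -- the inverse Fourier transform vanishes on the ball
  have hinvU : ∀ y ∈ Metric.ball x₀ r, 𝓕⁻ (𝓕 f) y = 0 := by
    intro y hy
    have hyU : y ∈ U := hball hy
    have hcont : ContinuousAt f₀ y := by
      have hev : f₀ =ᶠ[nhds y] (fun _ => (0 : ℂ)) := by
        filter_upwards [hU.mem_nhds hyU] with z hz
        simp [hf₀def, hz]
      exact ContinuousAt.congr continuousAt_const hev.symm
    have hinv := MeasureTheory.Integrable.fourierInv_fourier_eq hint₀
      (by rw [h𝓕eq]; exact hFint) hcont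
    rw [h𝓕eq] at hinv
    rw [hinv, hf₀def]
    simp [hyU]
  -- the inverse Fourier transform vanishes everywhere
  have hinv_all : ∀ p, 𝓕⁻ (𝓕 f) p = 0 :=
    inv_fourier_eq_zero (𝓕 f) hFmeas ha hdecay x₀ hr hinvU
  -- hence 𝓕 (𝓕 f) = 0
  have h𝓕𝓕 : 𝓕 (𝓕 f) = 0 := by
    funext x
    have := Real.fourierInv_eq_fourier_neg (𝓕 f) (-x)
    rw [neg_neg] at this
    rw [← this]
    exact hinv_all (-x)
  -- hence 𝓕 f = 0
  have hF0 : 𝓕 f = 0 := by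
    have hinv2 := Continuous.fourierInv_fourier_eq hFcont hFint
      (by rw [h𝓕𝓕]; exact integrable_zero _ _ _)
    rw [← hinv2, h𝓕𝓕]
    funext y
    rw [Real.fourierInv_eq]
    simp
  -- conclude by testing against smooth compactly supported functions
  have key : ∀ (g : EuclideanSpace ℝ (Fin d) → ℝ), ContDiff ℝ (⊤ : ℕ∞) g →
      HasCompactSupport g → ∫ x, g x • f x = 0 := by
    intro g hg hgsupp
    have hgc : ContDiff ℝ (⊤ : ℕ∞) (fun x => ((g x : ℝ) : ℂ)) :=
      Complex.ofRealCLM.contDiff.comp hg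
    have hgcsupp : HasCompactSupport (fun x => ((g x : ℝ) : ℂ)) :=
      hgsupp.comp_left (g := fun t : ℝ => (t : ℂ)) Complex.ofReal_zero
    let φ : SchwartzMap (EuclideanSpace ℝ (Fin d)) ℂ :=
      { toFun := fun x => ((g x : ℝ) : ℂ)
        smooth' := by exact_mod_cast hgc
        decay' := by
          intro k n
          have hsupp2 : HasCompactSupport
              (iteratedFDeriv ℝ n (fun x => ((g x : ℝ) : ℂ))) :=
            hgcsupp.iteratedFDeriv n
          have hcont2 : Continuous (iteratedFDeriv ℝ n (fun x => ((g x : ℝ) : ℂ))) :=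
            (hgc.continuous_iteratedFDeriv (by exact_mod_cast le_top))
          have hcont3 : Continuous fun x : EuclideanSpace ℝ (Fin d) =>
              ‖x‖ ^ k * ‖iteratedFDeriv ℝ n (fun y => ((g y : ℝ) : ℂ)) x‖ :=
            (continuous_norm.pow k).mul hcont2.norm
          have hcs3 : HasCompactSupport fun x : EuclideanSpace ℝ (Fin d) =>
              ‖x‖ ^ k * ‖iteratedFDeriv ℝ n (fun y => ((g y : ℝ) : ℂ)) x‖ :=
            (hsupp2.norm).mul_left
          obtain ⟨B, hB⟩ := hcont3.bounded_above_of_compact_support hcs3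
          refine ⟨B, fun x => ?_⟩
          have := hB x
          rw [Real.norm_eq_abs] at this
          exact (le_abs_self _).trans this }
    set ψ := (SchwartzMap.fourierTransformCLE ℂ (SchwartzMap (EuclideanSpace ℝ (Fin d)) ℂ)).symm φ with hψdef
    have h𝓕ψ : 𝓕 (ψ : EuclideanSpace ℝ (Fin d) → ℂ) = (φ : EuclideanSpace ℝ (Fin d) → ℂ) := by
      have h1 := (SchwartzMap.fourierTransformCLE ℂ (SchwartzMap (EuclideanSpace ℝ (Fin d)) ℂ)).apply_symm_apply φ
      calc 𝓕 (ψ : EuclideanSpace ℝ (Fin d) → ℂ)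
          = ((SchwartzMap.fourierTransformCLE ℂ (SchwartzMap (EuclideanSpace ℝ (Fin d)) ℂ) ψ : SchwartzMap (EuclideanSpace ℝ (Fin d)) ℂ) :
              EuclideanSpace ℝ (Fin d) → ℂ) := by
            rfl
        _ = (φ : EuclideanSpace ℝ (Fin d) → ℂ) := by rw [h1]
    have hflip : (innerₗ (EuclideanSpace ℝ (Fin d))).flip = innerₗ (EuclideanSpace ℝ (Fin d)) := by
      apply LinearMap.ext; intro x; apply LinearMap.ext; intro y
      exact real_inner_comm x y
    have hmul := VectorFourier.integral_fourierIntegral_smul_eq_flip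
      (e := Real.fourierChar) (μ := (volume : Measure (EuclideanSpace ℝ (Fin d))))
      (ν := (volume : Measure (EuclideanSpace ℝ (Fin d))))
      (L := innerₗ (EuclideanSpace ℝ (Fin d)))
      Real.continuous_fourierChar (by exact continuous_inner) hf ψ.integrable
    rw [hflip] at hmul
    -- LHS of hmul is zero
    have hLHS : ∫ ξ, (VectorFourier.fourierIntegral Real.fourierChar volume
        (innerₗ (EuclideanSpace ℝ (Fin d))) f ξ) • (ψ : EuclideanSpace ℝ (Fin d) → ℂ) ξ = 0 := by
      have : ∀ ξ, (VectorFourier.fourierIntegral Real.fourierChar volume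
          (innerₗ (EuclideanSpace ℝ (Fin d))) f ξ) = 0 := by
        intro ξ
        have : 𝓕 f ξ = 0 := by rw [hF0]; rfl
        exact this
      simp only [this, zero_smul, integral_zero]
    rw [hLHS] at hmul
    have hRHS : ∫ x, f x • (VectorFourier.fourierIntegral Real.fourierChar volume
        (innerₗ (EuclideanSpace ℝ (Fin d))) (ψ : EuclideanSpace ℝ (Fin d) → ℂ) x) =
        ∫ x, g x • f x := by
      apply integral_congr_ae
      filter_upwards with x
      have h2 : (VectorFourier.fourierIntegral Real.fourierChar volume
          (innerₗ (EuclideanSpace ℝ (Fin d))) (ψ : EuclideanSpace ℝ (Fin d) → ℂ) x)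
          = ((g x : ℝ) : ℂ) := by
        have : 𝓕 (ψ : EuclideanSpace ℝ (Fin d) → ℂ) x = ((g x : ℝ) : ℂ) := by
          rw [h𝓕ψ]; rfl
        exact this
      rw [h2, smul_eq_mul, Complex.real_smul, mul_comm]
    rw [hRHS] at hmul
    exact hmul.symm
  have hloc : MeasureTheory.LocallyIntegrable f volume := hf.locallyIntegrable
  have := ae_eq_zero_of_integral_contDiff_smul_eq_zero hloc (fun g hg hsupp => key g
    (by exact_mod_cast hg) hsupp)
  filter_upwards [this] with x hx
  exact hx
end

section
/- Let f ∈ C_c(ℝ^d) and for y ∈ ℝ^{d−1} let f_y(t) = f(t, y), f_y*(t) = conj(f_y(−t)), and g(t) = ∫_{ℝ^{d−1}} (f_y * f_y*)(t) dy. Then g ∈ C_c(ℝ), ĝ(ξ) = ∫_{ℝ^{d−1}} |f̂_y(ξ)|² dy ≥ 0 for all ξ ∈ ℝ, and ∫_ℝ ĝ(ξ) dξ = ‖f‖²_{L²(ℝ^d)}. -/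
open MeasureTheory Real Set Complex Function
open scoped FourierTransform

lemma fiber_fourier_autocorr {φ : ℝ → ℂ} (hφ : Continuous φ) (hc : HasCompactSupport φ) (ξ : ℝ) :
    𝓕 (fun t => ∫ s, φ s * (starRingEnd ℂ) (φ (s - t))) ξ = ((‖𝓕 φ ξ‖ ^ 2 : ℝ) : ℂ) := by
  obtain ⟨R, hR0, hRsub⟩ := hc.isBounded.subset_closedBall_lt 0 0
  have hzero : ∀ s : ℝ, R < |s| → φ s = 0 := by
    intro s hs
    by_contra h
    have h1 : s ∈ Metric.closedBall (0:ℝ) R :=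
      hRsub (subset_tsupport φ (by simpa [Function.mem_support] using h))
    simp [Metric.mem_closedBall, Real.dist_eq] at h1
    linarith
  -- the joint integrand
  set F : ℝ × ℝ → ℂ := fun p => (𝐞 (-(p.1 * ξ)) : Circle) * (φ p.2 * (starRingEnd ℂ) (φ (p.2 - p.1))) with hF
  have contF : Continuous F := by
    apply Continuous.mul
    · exact continuous_subtype_val.comp
        (Real.continuous_fourierChar.comp (continuous_fst.mul continuous_const).neg)
    · exact (hφ.comp continuous_snd).mul
        ((Complex.continuous_conj).comp (hφ.comp (continuous_snd.sub continuous_fst)))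
  have cptF : HasCompactSupport F := by
    apply HasCompactSupport.intro (K := (Icc (-(2*R)) (2*R)) ×ˢ (Icc (-R) R))
      (isCompact_Icc.prod isCompact_Icc)
    intro p hp
    rw [Set.mem_prod, not_and_or] at hp
    have : φ p.2 = 0 ∨ φ (p.2 - p.1) = 0 := by
      rcases hp with h | h
      · rw [Set.mem_Icc, not_and_or] at h
        by_cases h2 : R < |p.2|
        · exact Or.inl (hzero _ h2)
        · push_neg at h2
          refine Or.inr (hzero _ ?_)
          rcases h with h | h <;> push_neg at h <;> rw [abs_le] at h2 <;>
            rw [abs_sub_comm, lt_abs] <;> [skip; skip]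
          · right; linarith
          · left; linarith
      · rw [Set.mem_Icc, not_and_or] at h
        refine Or.inl (hzero _ ?_)
        rw [lt_abs]
        rcases h with h | h <;> push_neg at h
        · right; linarith
        · left; linarith
    rcases this with h | h <;> simp [hF, h]
  have hFint : Integrable F := contF.integrable_of_hasCompactSupport cptF
  rw [Real.fourier_real_eq]
  calc (∫ t : ℝ, 𝐞 (-(t * ξ)) • (∫ s : ℝ, φ s * (starRingEnd ℂ) (φ (s - t))))
      = ∫ t : ℝ, ∫ s : ℝ, ((𝐞 (-(t * ξ)) : Circle) : ℂ) * (φ s * (starRingEnd ℂ) (φ (s - t))) := by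
        simp_rw [Circle.smul_def, smul_eq_mul, integral_const_mul]
    _ = ∫ s : ℝ, ∫ t : ℝ, ((𝐞 (-(t * ξ)) : Circle) : ℂ) * (φ s * (starRingEnd ℂ) (φ (s - t))) := by
        apply integral_integral_swap
        rw [← Measure.volume_eq_prod]
        exact hFint
    _ = ∫ s : ℝ, (((𝐞 (-(s * ξ)) : Circle) : ℂ) * φ s) * (starRingEnd ℂ) (𝓕 φ ξ) := by
        congr 1 with s
        have key : ∫ t : ℝ, ((𝐞 (-(t * ξ)) : Circle) : ℂ) * (starRingEnd ℂ) (φ (s - t))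
            = ((𝐞 (-(s * ξ)) : Circle) : ℂ) * (starRingEnd ℂ) (𝓕 φ ξ) := by
          set G : ℝ → ℂ := fun u => ((𝐞 (-((s - u) * ξ)) : Circle) : ℂ) * (starRingEnd ℂ) (φ u) with hG
          have h1 : (fun t : ℝ => ((𝐞 (-(t * ξ)) : Circle) : ℂ) * (starRingEnd ℂ) (φ (s - t)))
              = fun t => (fun u => G (-u)) (t - s) := by
            ext t
            simp only [hG, neg_sub, sub_sub_cancel]
          rw [h1, integral_sub_right_eq_self (fun u => G (-u)) s, integral_neg_eq_self]
          have h2 : ∀ u : ℝ, G u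
              = ((𝐞 (-(s * ξ)) : Circle) : ℂ) * (((𝐞 (u * ξ) : Circle) : ℂ) * (starRingEnd ℂ) (φ u)) := by
            intro u
            have : -((s - u) * ξ) = -(s * ξ) + u * ξ := by ring
            rw [hG]
            simp only [this, AddChar.map_add_eq_mul, Circle.coe_mul, mul_assoc]
          simp_rw [h2, integral_const_mul]
          congr 1
          rw [Real.fourier_real_eq, ← integral_conj]
          · congr 1 with u
            simp only [Circle.smul_def, smul_eq_mul, map_mul, Real.fourierChar_apply]
            rw [← Complex.exp_conj]
            simp only [map_mul, Complex.conj_I, Complex.conj_ofReal, mul_neg]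
            push_cast
            ring_nf
        calc ∫ t : ℝ, ((𝐞 (-(t * ξ)) : Circle) : ℂ) * (φ s * (starRingEnd ℂ) (φ (s - t)))
            = φ s * ∫ t : ℝ, ((𝐞 (-(t * ξ)) : Circle) : ℂ) * (starRingEnd ℂ) (φ (s - t)) := by
              rw [← integral_const_mul]; congr 1 with t; ring
          _ = φ s * (((𝐞 (-(s * ξ)) : Circle) : ℂ) * (starRingEnd ℂ) (𝓕 φ ξ)) := by rw [key]
          _ = (((𝐞 (-(s * ξ)) : Circle) : ℂ) * φ s) * (starRingEnd ℂ) (𝓕 φ ξ) := by ring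
    _ = ((‖𝓕 φ ξ‖ ^ 2 : ℝ) : ℂ) := by
        rw [integral_mul_const]
        have : ∫ s : ℝ, ((𝐞 (-(s * ξ)) : Circle) : ℂ) * φ s = 𝓕 φ ξ := by
          rw [Real.fourier_real_eq]
          simp_rw [Circle.smul_def, smul_eq_mul]
        rw [this, Complex.mul_conj]
        rw [Complex.normSq_eq_norm_sq]
        
/-- For `f ∈ C_c(ℝ × ℝ^m)`, with `g(t) = ∫_y (f_y * f_y^*)(t) dy` where
`f_y(t) = f(t,y)` and `f_y^*(t) = conj(f_y(-t))`, one has `g ∈ C_c(ℝ)`,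
`ĝ(ξ) = ∫_y |f̂_y(ξ)|² dy ≥ 0`, and `∫ ĝ = ‖f‖²_{L²}`. -/
theorem autocorrelation_properties
    {m : ℕ} (f : ℝ × EuclideanSpace ℝ (Fin m) → ℂ)
    (hf : Continuous f) (hcpt : HasCompactSupport f)
    (g : ℝ → ℂ)
    (hg : ∀ t : ℝ, g t = ∫ y : EuclideanSpace ℝ (Fin m),
      ∫ s : ℝ, f (s, y) * (starRingEnd ℂ) (f (s - t, y))) :
    Continuous g ∧ HasCompactSupport g ∧
    (∀ ξ : ℝ, 𝓕 g ξ =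
      ((∫ y : EuclideanSpace ℝ (Fin m), ‖𝓕 (fun t : ℝ => f (t, y)) ξ‖ ^ 2 : ℝ) : ℂ)) ∧
    (∫ ξ : ℝ, (𝓕 g ξ).re) = ∫ p : ℝ × EuclideanSpace ℝ (Fin m), ‖f p‖ ^ 2 := by
  obtain ⟨R, hR0, hRsub⟩ := hcpt.isBounded.subset_closedBall_lt 0 0
  have hzero : ∀ p : ℝ × EuclideanSpace ℝ (Fin m), R < ‖p‖ → f p = 0 := by
    intro p hp
    by_contra h
    have h1 : p ∈ Metric.closedBall 0 R :=
      hRsub (subset_tsupport f (by simpa [Function.mem_support] using h))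
    rw [Metric.mem_closedBall, dist_zero_right] at h1
    linarith
  have hzero1 : ∀ (s : ℝ) (y : EuclideanSpace ℝ (Fin m)), R < |s| → f (s, y) = 0 := by
    intro s y hs
    have h2 : |s| ≤ ‖((s, y) : ℝ × EuclideanSpace ℝ (Fin m))‖ := by
      rw [← Real.norm_eq_abs]
      exact norm_fst_le ((s, y) : ℝ × EuclideanSpace ℝ (Fin m))
    exact hzero _ (lt_of_lt_of_le hs h2)
  have hzero2 : ∀ (s : ℝ) (y : EuclideanSpace ℝ (Fin m)), R < ‖y‖ → f (s, y) = 0 := by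
    intro s y hs
    exact hzero _ (lt_of_lt_of_le hs (norm_snd_le ((s, y) : ℝ × EuclideanSpace ℝ (Fin m))))
  have hfy_cont : ∀ y : EuclideanSpace ℝ (Fin m), Continuous fun s : ℝ => f (s, y) :=
    fun y => hf.comp (continuous_id.prodMk continuous_const)
  have hfy_cpt : ∀ y : EuclideanSpace ℝ (Fin m), HasCompactSupport fun s : ℝ => f (s, y) := by
    intro y
    apply HasCompactSupport.intro (isCompact_Icc (a := -R) (b := R))
    intro s hs
    rw [Set.mem_Icc, not_and_or] at hs
    refine hzero1 s y ?_
    rw [lt_abs]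
    rcases hs with h | h <;> push_neg at h
    · right; linarith
    · left; linarith
  obtain ⟨C, hC⟩ := hf.bounded_above_of_compact_support hcpt
  have hC0 : 0 ≤ C := le_trans (norm_nonneg _) (hC 0)
  set H : ℝ × EuclideanSpace ℝ (Fin m) → ℂ :=
    fun q => ∫ s : ℝ, f (s, q.2) * (starRingEnd ℂ) (f (s - q.1, q.2)) with hH
  have hgH : ∀ t, g t = ∫ y, H (t, y) := fun t => hg t
  have hH_cont : Continuous H := by
    apply continuous_of_dominated (bound := (Set.Icc (-R) R).indicator fun _ => C * C)
    · intro q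
      exact (((hfy_cont q.2)).mul ((Complex.continuous_conj).comp
        (hf.comp ((continuous_id.sub continuous_const).prodMk continuous_const)))).aestronglyMeasurable
    · intro q
      filter_upwards with s
      by_cases hs : s ∈ Set.Icc (-R) R
      · rw [Set.indicator_of_mem hs]
        rw [norm_mul, RCLike.norm_conj]
        exact mul_le_mul (hC _) (hC _) (norm_nonneg _) hC0
      · rw [Set.indicator_of_notMem hs]
        have : f (s, q.2) = 0 := by
          refine hzero1 s q.2 ?_
          rw [Set.mem_Icc, not_and_or] at hs
          rw [lt_abs]
          rcases hs with h | h <;> push_neg at h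
          · right; linarith
          · left; linarith
        simp [this]
    · rw [integrable_indicator_iff measurableSet_Icc]
      exact integrableOn_const measure_Icc_lt_top.ne
    · filter_upwards with s
      exact ((hf.comp (continuous_const.prodMk (continuous_snd))).mul
        ((Complex.continuous_conj).comp (hf.comp
          ((continuous_const.sub continuous_fst).prodMk continuous_snd))))
  have hH_zero : ∀ q : ℝ × EuclideanSpace ℝ (Fin m),
      q ∉ Set.Icc (-(2 * R)) (2 * R) ×ˢ Metric.closedBall (0 : EuclideanSpace ℝ (Fin m)) R →
      H q = 0 := by
    intro q hq
    rw [Set.mem_prod, not_and_or] at hq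
    have : ∀ s : ℝ, f (s, q.2) * (starRingEnd ℂ) (f (s - q.1, q.2)) = 0 := by
      intro s
      rcases hq with h | h
      · rw [Set.mem_Icc, not_and_or] at h
        have h2R : 2 * R < |q.1| := by
          rw [lt_abs]
          rcases h with h | h <;> push_neg at h
          · right; linarith
          · left; linarith
        by_cases h2 : R < |s|
        · rw [hzero1 s q.2 h2, zero_mul]
        · push_neg at h2
          have : R < |s - q.1| := by
            have := abs_sub_abs_le_abs_sub q.1 s
            have h3 : |s - q.1| = |q.1 - s| := abs_sub_comm _ _
            rw [h3]
            linarith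
          rw [hzero1 _ q.2 this, map_zero, mul_zero]
      · rw [Metric.mem_closedBall, dist_zero_right, not_le] at h
        rw [hzero2 s q.2 h, zero_mul]
    rw [hH]
    simp only []
    rw [show (fun s : ℝ => f (s, q.2) * (starRingEnd ℂ) (f (s - q.1, q.2))) = fun _ => (0 : ℂ)
      from funext this]
    exact integral_zero _ _
  have hH_cpt : HasCompactSupport H :=
    HasCompactSupport.intro (isCompact_Icc.prod (isCompact_closedBall 0 R)) hH_zero
  have hH_int : Integrable H := hH_cont.integrable_of_hasCompactSupport hH_cpt
  obtain ⟨D, hD⟩ := hH_cont.bounded_above_of_compact_support hH_cpt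
  have hg_cont : Continuous g := by
    rw [show g = fun t => ∫ y, H (t, y) from funext hgH]
    apply continuous_of_dominated
      (bound := (Metric.closedBall (0 : EuclideanSpace ℝ (Fin m)) R).indicator fun _ => D)
    · intro t
      exact (hH_cont.comp (continuous_const.prodMk continuous_id)).aestronglyMeasurable
    · intro t
      filter_upwards with y
      by_cases hy : y ∈ Metric.closedBall (0 : EuclideanSpace ℝ (Fin m)) R
      · rw [Set.indicator_of_mem hy]; exact hD _
      · rw [Set.indicator_of_notMem hy]
        rw [hH_zero (t, y) (by simp [Set.mem_prod, hy])]
        simp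
    · rw [integrable_indicator_iff measurableSet_closedBall]
      exact integrableOn_const (measure_closedBall_lt_top).ne
    · filter_upwards with y
      exact hH_cont.comp (continuous_id.prodMk continuous_const)
  have hg_cpt : HasCompactSupport g := by
    apply HasCompactSupport.intro (isCompact_Icc (a := -(2 * R)) (b := 2 * R))
    intro t ht
    rw [hgH]
    have : ∀ y : EuclideanSpace ℝ (Fin m), H (t, y) = 0 := fun y =>
      hH_zero (t, y) (by rw [Set.mem_prod, not_and_or]; exact Or.inl ht)
    rw [show (fun y : EuclideanSpace ℝ (Fin m) => H (t, y)) = fun _ => (0 : ℂ) from funext this]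
    exact integral_zero _ _
  have hg_int : Integrable g := hg_cont.integrable_of_hasCompactSupport hg_cpt
  have hfour : ∀ ξ : ℝ, 𝓕 g ξ =
      ((∫ y : EuclideanSpace ℝ (Fin m), ‖𝓕 (fun t : ℝ => f (t, y)) ξ‖ ^ 2 : ℝ) : ℂ) := by
    intro ξ
    have hK : Continuous fun q : ℝ × EuclideanSpace ℝ (Fin m) =>
        ((𝐞 (-(q.1 * ξ)) : Circle) : ℂ) * H q :=
      (continuous_subtype_val.comp (Real.continuous_fourierChar.comp
        (continuous_fst.mul continuous_const).neg)).mul hH_cont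
    have hKc : HasCompactSupport fun q : ℝ × EuclideanSpace ℝ (Fin m) =>
        ((𝐞 (-(q.1 * ξ)) : Circle) : ℂ) * H q := by
      apply HasCompactSupport.intro (isCompact_Icc.prod (isCompact_closedBall 0 R)) 
      intro q hq
      rw [hH_zero q hq, mul_zero]
    have h1 : 𝓕 g ξ = ∫ y, 𝓕 (fun t => H (t, y)) ξ := by
      rw [Real.fourier_real_eq]
      calc (∫ t : ℝ, 𝐞 (-(t * ξ)) • g t)
          = ∫ t : ℝ, ∫ y, ((𝐞 (-(t * ξ)) : Circle) : ℂ) * H (t, y) := by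
            congr 1 with t
            rw [hgH t, Circle.smul_def, smul_eq_mul, integral_const_mul]
        _ = ∫ y, ∫ t : ℝ, ((𝐞 (-(t * ξ)) : Circle) : ℂ) * H (t, y) := by
            apply integral_integral_swap
            rw [← Measure.volume_eq_prod]
            exact hK.integrable_of_hasCompactSupport hKc
        _ = ∫ y, 𝓕 (fun t => H (t, y)) ξ := by
            simp_rw [Real.fourier_real_eq, Circle.smul_def, smul_eq_mul]
    rw [h1]
    have h2 : ∀ y : EuclideanSpace ℝ (Fin m), 𝓕 (fun t => H (t, y)) ξ =
        ((‖𝓕 (fun t : ℝ => f (t, y)) ξ‖ ^ 2 : ℝ) : ℂ) := fun y =>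
      fiber_fourier_autocorr (hfy_cont y) (hfy_cpt y) ξ
    simp_rw [h2]
    exact integral_ofReal
  refine ⟨hg_cont, hg_cpt, hfour, ?_⟩
  -- Part 4
  set c : ℝ → ℝ :=
    fun ξ => ∫ y : EuclideanSpace ℝ (Fin m), ‖𝓕 (fun t : ℝ => f (t, y)) ξ‖ ^ 2 with hcdef
  have hfour' : ∀ ξ, 𝓕 g ξ = ((c ξ : ℝ) : ℂ) := hfour
  have hnonneg : ∀ ξ, 0 ≤ c ξ := fun ξ => integral_nonneg fun y => by positivity
  have h𝓕cont : Continuous (𝓕 g) := by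
    exact VectorFourier.fourierIntegral_continuous Real.continuous_fourierChar
      (by exact continuous_inner) hg_int
  have hc_cont : Continuous c := by
    have hcc : c = fun ξ => (𝓕 g ξ).re := funext fun ξ => by rw [hfour' ξ, Complex.ofReal_re]
    rw [hcc]
    exact Complex.continuous_re.comp h𝓕cont
  obtain ⟨Cg, hCg⟩ := hg_cont.bounded_above_of_compact_support hg_cpt
  have hCg0 : 0 ≤ Cg := le_trans (norm_nonneg _) (hCg 0)
  have key : ∀ b : ℝ, 0 < b → ∫ ξ : ℝ, rexp (-π * b * ξ ^ 2) * c ξ ≤ Cg := by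
    intro b hb
    have hbb : (0:ℝ) < π * b := by positivity
    have hψ_int : Integrable fun x : ℝ => Complex.exp (-↑π * (b:ℂ) * (x:ℂ) ^ 2) := by
      have h := integrable_cexp_neg_mul_sq (b := ((π * b : ℝ) : ℂ)) (by simpa using hbb)
      have heq : ∀ x : ℝ, Complex.exp (-((π * b : ℝ):ℂ) * (x:ℂ)^2)
          = Complex.exp (-↑π * (b:ℂ) * (x:ℂ)^2) := by
        intro x; congr 1; push_cast; ring
      simpa [heq] using h
    have hflip : (innerₗ ℝ).flip = innerₗ ℝ :=
      LinearMap.ext fun x => LinearMap.ext fun y => real_inner_comm x y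
    have mult : (∫ ξ : ℝ, 𝓕 g ξ * Complex.exp (-↑π * (b:ℂ) * (ξ:ℂ) ^ 2))
        = ∫ x : ℝ, g x * 𝓕 (fun ξ : ℝ => Complex.exp (-↑π * (b:ℂ) * (ξ:ℂ)^2)) x := by
      have h := VectorFourier.integral_bilin_fourierIntegral_eq_flip
        (L := innerₗ ℝ) (ContinuousLinearMap.mul ℂ ℂ) Real.continuous_fourierChar
        (by exact continuous_inner) hg_int hψ_int
      rw [hflip] at h
      exact h
    have hb' : 0 < ((b:ℝ):ℂ).re := by simpa using hb
    have h𝓕ψ := fourier_gaussian_pi hb'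
    have hnorm : ∀ x : ℝ, ‖(1 / ((b:ℂ) ^ (1/2 : ℂ)) * Complex.exp (-↑π / (b:ℂ) * (x:ℂ)^2))‖
        = (1 / b ^ (1/2 : ℝ)) * rexp (-(π / b) * x ^ 2) := by
      intro x
      rw [norm_mul]
      congr 1
      · rw [norm_div, norm_one]
        congr 1
        rw [Complex.norm_cpow_eq_rpow_re_of_pos hb]
        norm_num
      · rw [Complex.norm_exp]
        congr 1
        have hre : (-↑π / (b:ℂ) * (x:ℂ)^2) = ((-(π / b) * x ^ 2 : ℝ) : ℂ) := by
          push_cast; ring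
        rw [hre, Complex.ofReal_re]
    have hgauss_int : Integrable fun x : ℝ => rexp (-(π/b) * x^2) :=
      integrable_exp_neg_mul_sq (by positivity)
    have hIψ : ∫ x : ℝ, (1 / b ^ ((1:ℝ)/2)) * rexp (-(π/b) * x^2) = 1 := by
      rw [integral_const_mul, integral_gaussian]
      have hpb : π / (π / b) = b := by field_simp
      rw [hpb, Real.sqrt_eq_rpow, one_div, inv_mul_cancel₀]
      exact (Real.rpow_pos_of_pos hb _).ne'
    have hofReal : ((∫ ξ : ℝ, rexp (-π * b * ξ^2) * c ξ : ℝ) : ℂ)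
        = ∫ ξ : ℝ, 𝓕 g ξ * Complex.exp (-↑π * (b:ℂ) * (ξ:ℂ)^2) := by
      have h5 : ((∫ ξ : ℝ, rexp (-π * b * ξ^2) * c ξ : ℝ) : ℂ)
          = ∫ ξ : ℝ, ((rexp (-π * b * ξ^2) * c ξ : ℝ) : ℂ) := integral_ofReal.symm
      rw [h5]
      congr 1 with ξ
      rw [hfour' ξ, Complex.ofReal_mul, Complex.ofReal_exp]
      have harg : ((-π * b * ξ^2 : ℝ) : ℂ) = -↑π * ↑b * (ξ:ℂ)^2 := by push_cast; ring
      rw [harg]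
      ring
    have hfinal : ∫ ξ : ℝ, rexp (-π * b * ξ^2) * c ξ
        = (∫ x : ℝ, g x * 𝓕 (fun ξ : ℝ => Complex.exp (-↑π * (b:ℂ) * (ξ:ℂ)^2)) x).re := by
      rw [← mult, ← hofReal, Complex.ofReal_re]
    rw [hfinal]
    calc (∫ x : ℝ, g x * 𝓕 (fun ξ : ℝ => Complex.exp (-↑π * (b:ℂ) * (ξ:ℂ)^2)) x).re
        ≤ ‖∫ x : ℝ, g x * 𝓕 (fun ξ : ℝ => Complex.exp (-↑π * (b:ℂ) * (ξ:ℂ)^2)) x‖ :=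
          Complex.re_le_norm _
      _ ≤ ∫ x : ℝ, ‖g x * 𝓕 (fun ξ : ℝ => Complex.exp (-↑π * (b:ℂ) * (ξ:ℂ)^2)) x‖ :=
          norm_integral_le_integral_norm _
      _ ≤ ∫ x : ℝ, Cg * ((1 / b ^ ((1:ℝ)/2)) * rexp (-(π/b) * x^2)) := by
          apply integral_mono_of_nonneg
          · filter_upwards with x; positivity
          · exact (hgauss_int.const_mul _).const_mul _
          · filter_upwards with x
            rw [norm_mul, h𝓕ψ, hnorm x]
            apply mul_le_mul (hCg x) le_rfl (by positivity) hCg0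
      _ = Cg := by rw [integral_const_mul, hIψ, mul_one]
  -- Fatou argument: c is integrable
  have hint_n : ∀ n : ℕ, Integrable fun ξ : ℝ => rexp (-π * ((n:ℝ)+1)⁻¹ * ξ^2) * c ξ := by
    intro n
    have h1 : Integrable fun ξ : ℝ => rexp (-(π * ((n:ℝ)+1)⁻¹) * ξ^2) :=
      integrable_exp_neg_mul_sq (by positivity)
    have h2 : Integrable fun ξ : ℝ => c ξ * rexp (-(π * ((n:ℝ)+1)⁻¹) * ξ^2) := by
      apply h1.bdd_mul (c := ∫ x, ‖g x‖) hc_cont.aestronglyMeasurable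
      refine Filter.Eventually.of_forall fun ξ => ?_
      rw [Real.norm_eq_abs, _root_.abs_of_nonneg (hnonneg ξ)]
      have h3 : c ξ = ‖𝓕 g ξ‖ := by
        rw [hfour' ξ, Complex.norm_real, Real.norm_eq_abs, _root_.abs_of_nonneg (hnonneg ξ)]
      rw [h3]
      exact VectorFourier.norm_fourierIntegral_le_integral_norm _ _ _ _ _
    have heq : (fun ξ : ℝ => rexp (-π * ((n:ℝ)+1)⁻¹ * ξ^2) * c ξ)
        = fun ξ : ℝ => c ξ * rexp (-(π * ((n:ℝ)+1)⁻¹) * ξ^2) := by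
      funext ξ; rw [mul_comm]; ring_nf
    rw [heq]
    exact h2
  have hc_int : Integrable c := by
    refine ⟨hc_cont.aestronglyMeasurable, ?_⟩
    rw [hasFiniteIntegral_iff_norm]
    have hb1 : (∫⁻ ξ : ℝ, ENNReal.ofReal ‖c ξ‖)
        = ∫⁻ ξ : ℝ, ENNReal.ofReal (c ξ) := by
      apply lintegral_congr
      intro ξ
      rw [Real.norm_eq_abs, _root_.abs_of_nonneg (hnonneg ξ)]
    rw [hb1]
    have hlim : ∀ ξ : ℝ, Filter.Tendsto
        (fun n : ℕ => ENNReal.ofReal (rexp (-π * ((n:ℝ)+1)⁻¹ * ξ^2) * c ξ)) Filter.atTop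
        (nhds (ENNReal.ofReal (c ξ))) := by
      intro ξ
      apply ENNReal.tendsto_ofReal
      have h1 : Filter.Tendsto (fun n : ℕ => ((n:ℝ)+1)⁻¹) Filter.atTop (nhds 0) := by
        simpa only [one_div] using
          (tendsto_one_div_add_atTop_nhds_zero_nat : Filter.Tendsto (fun n : ℕ => 1 / ((n:ℝ)+1)) _ _)
      have h0 : Filter.Tendsto (fun n : ℕ => -π * ((n:ℝ)+1)⁻¹ * ξ^2) Filter.atTop (nhds 0) := by
        have h2 := (h1.const_mul (-π)).mul_const (ξ^2)
        simpa using h2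
      have h2 : Filter.Tendsto (fun n : ℕ => rexp (-π * ((n:ℝ)+1)⁻¹ * ξ^2)) Filter.atTop
          (nhds 1) := by
        have h3 := (Real.continuous_exp.continuousAt (x := (0:ℝ))).tendsto.comp h0
        simpa [Function.comp_def] using h3
      have h4 := h2.mul_const (c ξ)
      simpa using h4
    calc (∫⁻ ξ : ℝ, ENNReal.ofReal (c ξ))
        = ∫⁻ ξ : ℝ, Filter.liminf
            (fun n : ℕ => ENNReal.ofReal (rexp (-π * ((n:ℝ)+1)⁻¹ * ξ^2) * c ξ)) Filter.atTop :=
          lintegral_congr fun ξ => ((hlim ξ).liminf_eq).symm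
      _ ≤ Filter.liminf (fun n : ℕ => ∫⁻ ξ : ℝ,
            ENNReal.ofReal (rexp (-π * ((n:ℝ)+1)⁻¹ * ξ^2) * c ξ)) Filter.atTop := by
          apply lintegral_liminf_le
          intro n
          have hcont2 : Continuous fun ξ : ℝ => rexp (-π * ((n:ℝ)+1)⁻¹ * ξ^2) :=
            Real.continuous_exp.comp (continuous_const.mul (continuous_pow 2))
          exact ((hcont2.mul hc_cont).measurable).ennreal_ofReal
      _ ≤ ENNReal.ofReal Cg := by
          have hle : ∀ n : ℕ, (∫⁻ ξ : ℝ,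
              ENNReal.ofReal (rexp (-π * ((n:ℝ)+1)⁻¹ * ξ^2) * c ξ)) ≤ ENNReal.ofReal Cg := by
            intro n
            rw [← ofReal_integral_eq_lintegral_ofReal (hint_n n)
              (Filter.Eventually.of_forall fun ξ => mul_nonneg (Real.exp_pos _).le (hnonneg ξ))]
            exact ENNReal.ofReal_le_ofReal (key _ (by positivity))
          calc Filter.liminf (fun n : ℕ => ∫⁻ ξ : ℝ,
                ENNReal.ofReal (rexp (-π * ((n:ℝ)+1)⁻¹ * ξ^2) * c ξ)) Filter.atTop
              ≤ Filter.liminf (fun _ : ℕ => ENNReal.ofReal Cg) Filter.atTop :=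
                Filter.liminf_le_liminf (Filter.Eventually.of_forall hle)
            _ = ENNReal.ofReal Cg := Filter.liminf_const _
      _ < ⊤ := ENNReal.ofReal_lt_top
  have h𝓕g_int : Integrable (𝓕 g) := by
    rw [show 𝓕 g = fun ξ => ((c ξ : ℝ) : ℂ) from funext hfour']
    exact hc_int.ofReal
  have hinv : (∫ ξ : ℝ, 𝓕 g ξ) = g 0 := by
    have h0 := congrFun (hg_cont.fourierInv_fourier_eq hg_int h𝓕g_int) 0
    rw [← h0, Real.fourierInv_eq]
    simp
  have hre2 : (∫ ξ : ℝ, (𝓕 g ξ).re) = (g 0).re := by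
    have h3 := integral_re (f := 𝓕 g) h𝓕g_int
    simp only [RCLike.re_to_complex] at h3
    rw [h3, hinv]
  rw [hre2]
  have hg0 : g 0 = ((∫ y : EuclideanSpace ℝ (Fin m), ∫ s : ℝ, ‖f (s, y)‖^2 : ℝ) : ℂ) := by
    rw [hg 0]
    have h4 : ∀ y : EuclideanSpace ℝ (Fin m),
        (∫ s : ℝ, f (s, y) * (starRingEnd ℂ) (f (s - 0, y)))
        = ((∫ s : ℝ, ‖f (s, y)‖^2 : ℝ) : ℂ) := by
      intro y
      have h5 : ((∫ s : ℝ, ‖f (s, y)‖^2 : ℝ) : ℂ) = ∫ s : ℝ, ((‖f (s, y)‖^2 : ℝ) : ℂ) :=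
        integral_ofReal.symm
      rw [h5]
      congr 1 with s
      rw [sub_zero, Complex.mul_conj, Complex.normSq_eq_norm_sq]
    simp_rw [h4]
    exact integral_ofReal
  rw [hg0, Complex.ofReal_re]
  have hnf_cont : Continuous fun p : ℝ × EuclideanSpace ℝ (Fin m) => ‖f p‖^2 :=
    (hf.norm).pow 2
  have hnf_cpt : HasCompactSupport fun p : ℝ × EuclideanSpace ℝ (Fin m) => ‖f p‖^2 := by
    have h5 := hcpt.comp_left (g := fun z : ℂ => ‖z‖^2) (by simp)
    exact h5
  have hnf_int : Integrable (fun p : ℝ × EuclideanSpace ℝ (Fin m) => ‖f p‖^2) :=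
    hnf_cont.integrable_of_hasCompactSupport hnf_cpt
  have hswap : Integrable
      (Function.uncurry fun (s:ℝ) (y : EuclideanSpace ℝ (Fin m)) => ‖f (s,y)‖^2)
      (volume.prod volume) := by
    rw [← Measure.volume_eq_prod]
    exact hnf_int
  rw [← integral_integral_swap hswap]
  rw [show (volume : Measure (ℝ × EuclideanSpace ℝ (Fin m))) = volume.prod volume from
    Measure.volume_eq_prod _ _]
  exact (integral_prod _ hswap).symm
end
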